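/- Let H be a finite simple graph whose edge set is partitioned into three matchings M_1, M_2, M_3, let (G', col') be the associated 3-edge-colored graph, and let k ∈ ℕ. Then H has a vertex cover of size at most k if and only if (G', col') has a simultaneous feedback edge set of size at most k. -/

import Mathlib

open SimpleGraph Walk

lemma cycle_two_nbrs {V : Type*} {G : SimpleGraph V} {x : V} {p : G.Walk x x}
    (hp : p.IsCycle) :
    ∃ y z, y ≠ z ∧ G.Adj x y ∧ G.Adj x z ∧ y ∈ p.support ∧ z ∈ p.support := by
  have hlen := hp.three_le_length
  have hld : p.darts.length = p.length := p.length_darts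
  have hne : p.darts ≠ [] := by
    intro h; rw [h] at hld; simp at hld; omega
  set d1 := p.darts.head hne with hd1
  set dl := p.darts.getLast hne with hdl
  have h1f : d1.fst = x := (congrArg (·.fst) (p.head_darts_eq_firstDart hne)).trans rfl
  have hls : dl.snd = x := (congrArg (·.snd) (p.getLast_darts_eq_lastDart hne)).trans rfl
  refine ⟨d1.snd, dl.fst, ?_, h1f ▸ d1.adj, (hls ▸ dl.adj).symm,
    p.dart_snd_mem_support_of_mem_darts (List.head_mem hne),
    p.dart_fst_mem_support_of_mem_darts (List.getLast_mem hne)⟩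
  intro heq
  have hedge : d1.edge = dl.edge := by
    have h1 : d1.edge = s(x, d1.snd) := by rw [← h1f]; rfl
    have h2 : dl.edge = s(dl.fst, x) := by rw [← hls]; rfl
    rw [h1, h2, ← heq, Sym2.eq_swap]
  have hnodup := hp.edges_nodup
  have hE : p.edges = p.darts.map SimpleGraph.Dart.edge := rfl
  have hd1' : d1 = p.darts[0]'(by omega) := by rw [hd1, List.head_eq_getElem]
  have hdl' : dl = p.darts[p.darts.length - 1]'(by omega) := by
    rw [hdl, List.getLast_eq_getElem]
  have hidx : (0 : ℕ) = p.darts.length - 1 := by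
    have h0 : p.edges[0]'(by simp [hE]; omega) =
        p.edges[p.darts.length - 1]'(by simp [hE]; omega) := by
      simp only [hE, List.getElem_map]
      rw [← hd1', ← hdl', hedge]
    have := (List.Nodup.getElem_inj_iff hnodup).mp h0
    omega
  omega

lemma cycle_two_nbrs_mem {V : Type*} [DecidableEq V] {G : SimpleGraph V} {a x : V}
    {c : G.Walk a a} (hc : c.IsCycle) (hx : x ∈ c.support) :
    ∃ y z, y ≠ z ∧ G.Adj x y ∧ G.Adj x z ∧ y ∈ c.support ∧ z ∈ c.support := by
  obtain ⟨y, z, hyz, hy, hz, hys, hzs⟩ := cycle_two_nbrs (hc.rotate hx)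
  have hmem : ∀ w, w ∈ (c.rotate x hx).support ↔ w ∈ c.support := by
    intro w
    rw [← SimpleGraph.Walk.mem_verts_toSubgraph, ← SimpleGraph.Walk.mem_verts_toSubgraph,
      SimpleGraph.Walk.toSubgraph_rotate]
  exact ⟨y, z, hyz, hy, hz, (hmem y).mp hys, (hmem z).mp hzs⟩


/-- The 3-edge-colored graph `(G', col')` associated with a graph `H` whose edge set is
partitioned into three matchings: the underlying graph `G'` on `V(H) × Bool` has, for
every `v ∈ V(H)`, the edge `{(v, false), (v, true)}` (color set `{1,2,3}`), and for
every edge `{v,u}` of `H` the edges `{(v,b),(u,b)}` for `b ∈ Bool`. -/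
def assocGraph {V : Type*} (H : SimpleGraph V) : SimpleGraph (V × Bool) :=
  SimpleGraph.fromRel fun a b =>
    (a.1 = b.1 ∧ a.2 ≠ b.2) ∨ (a.2 = b.2 ∧ H.Adj a.1 b.1)

/-- The color-`i` graph `G'_i` of the associated 3-edge-colored graph, where `M` is the
matching with color `i`: it contains all edges `{(v, false), (v, true)}` (these have
color set `{1,2,3}`) and the edges `{(v,b),(u,b)}` for `{v,u} ∈ M`. -/
def assocColorGraph {V : Type*} (H : SimpleGraph V) (M : Set (Sym2 V)) :
    SimpleGraph (V × Bool) :=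
  SimpleGraph.fromRel fun a b =>
    (a.1 = b.1 ∧ a.2 ≠ b.2) ∨ (a.2 = b.2 ∧ H.Adj a.1 b.1 ∧ s(a.1, b.1) ∈ M)

/-- Let `H` be a finite simple graph whose edge set is partitioned
into three matchings `M 0, M 1, M 2`, let `(G', col')` be the associated 3-edge-colored
graph, and let `k ∈ ℕ`. Then `H` has a vertex cover of size at most `k` iff
`(G', col')` has a simultaneous feedback edge set of size at most `k`. -/
theorem stmt_7 {V : Type*} [Fintype V] [DecidableEq V] (H : SimpleGraph V)
    (M : Fin 3 → Set (Sym2 V))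
    (hpart : (⋃ i, M i) = H.edgeSet)
    (hdisj : ∀ i j, i ≠ j → Disjoint (M i) (M j))
    (hmatch : ∀ i, ∀ e ∈ M i, ∀ f ∈ M i, e ≠ f → ∀ x : V, ¬(x ∈ e ∧ x ∈ f))
    (k : ℕ) :
    (∃ S : Finset V, S.card ≤ k ∧ ∀ ⦃a b : V⦄, H.Adj a b → a ∈ S ∨ b ∈ S) ↔
    (∃ S : Finset (Sym2 (V × Bool)), S.card ≤ k ∧
      (S : Set (Sym2 (V × Bool))) ⊆ (assocGraph H).edgeSet ∧
      ∀ i : Fin 3,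
        ((assocColorGraph H (M i)).deleteEdges (S : Set (Sym2 (V × Bool)))).IsAcyclic) := by
  constructor
  · rintro ⟨S, hcard, hcover⟩
    refine ⟨S.image (fun v => s((v, false), (v, true))),
      le_trans Finset.card_image_le hcard, ?_, ?_⟩
    · intro e he
      simp only [Finset.coe_image, Set.mem_image, Finset.mem_coe] at he
      obtain ⟨v, hv, rfl⟩ := he
      rw [SimpleGraph.mem_edgeSet, assocGraph, SimpleGraph.fromRel_adj]
      exact ⟨by simp, Or.inl (Or.inl ⟨rfl, by simp⟩)⟩
    · intro i a c hc
      have hadj : ∀ x y : V × Bool,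
          ((assocColorGraph H (M i)).deleteEdges
            ((S.image (fun v => s((v, false), (v, true)))) : Set (Sym2 (V × Bool)))).Adj x y →
          (x.1 = y.1 ∧ x.2 ≠ y.2 ∧ x.1 ∉ S) ∨
          (x.2 = y.2 ∧ H.Adj x.1 y.1 ∧ s(x.1, y.1) ∈ M i) := by
        rintro ⟨x1, x2⟩ ⟨y1, y2⟩ hxy
        rw [SimpleGraph.deleteEdges_adj] at hxy
        obtain ⟨hadj', hnd⟩ := hxy
        rw [assocColorGraph, SimpleGraph.fromRel_adj] at hadj'
        obtain ⟨hne, hrel⟩ := hadj'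
        simp only at hrel ⊢
        have hvert : x1 = y1 → x2 ≠ y2 → x1 ∉ S := by
          intro h1 h2 hmemS
          apply hnd
          simp only [Finset.coe_image, Set.mem_image, Finset.mem_coe]
          refine ⟨x1, hmemS, ?_⟩
          subst h1
          cases x2 <;> cases y2
          · exact absurd rfl h2
          · rfl
          · exact Sym2.eq_swap
          · exact absurd rfl h2
        rcases hrel with (⟨h1, h2⟩ | ⟨h1, h2, h3⟩) | (⟨h1, h2⟩ | ⟨h1, h2, h3⟩)
        · exact Or.inl ⟨h1, h2, hvert h1 h2⟩
        · exact Or.inr ⟨h1, h2, h3⟩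
        · exact Or.inl ⟨h1.symm, Ne.symm h2, hvert h1.symm (Ne.symm h2)⟩
        · exact Or.inr ⟨h1.symm, h2.symm, Sym2.eq_swap ▸ h3⟩
      have key : ∀ w ∈ c.support, w.1 ∉ S ∧
          ∃ v, H.Adj w.1 v ∧ s(w.1, v) ∈ M i ∧ (v, w.2) ∈ c.support := by
        intro w hw
        obtain ⟨y, z, hyz, hy, hz, hys, hzs⟩ := cycle_two_nbrs_mem hc hw
        have cy := hadj w y hy
        have cz := hadj w z hz
        have vertEq : ∀ u : V × Bool, w.1 = u.1 → w.2 ≠ u.2 → u = (w.1, !w.2) := by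
          intro u h1 h2
          have : u.2 = !w.2 := Bool.eq_not_iff.mpr (Ne.symm h2)
          rw [Prod.ext_iff]
          exact ⟨h1.symm, this⟩
        have horMem : ∀ u : V × Bool, w.2 = u.2 → u ∈ c.support → (u.1, w.2) ∈ c.support := by
          intro u h1 hu
          have : (u.1, w.2) = u := by rw [h1]
          rw [this]; exact hu
        have horUnique : ∀ u u' : V × Bool, w.2 = u.2 → w.2 = u'.2 →
            s(w.1, u.1) ∈ M i → s(w.1, u'.1) ∈ M i → u = u' := by
          intro u u' h1 h1' h3 h3'
          have he : u.1 = u'.1 := by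
            by_contra hne'
            have hne2 : s(w.1, u.1) ≠ s(w.1, u'.1) := by
              intro hh
              rw [Sym2.eq_iff] at hh
              rcases hh with ⟨-, h⟩ | ⟨ha, hb⟩
              · exact hne' h
              · exact hne' (hb.trans ha)
            exact hmatch i _ h3 _ h3' hne2 w.1 ⟨Sym2.mem_mk_left _ _, Sym2.mem_mk_left _ _⟩
          have : u = (u.1, w.2) := by rw [h1]
          have h' : u' = (u'.1, w.2) := by rw [h1']
          rw [this, h', he]
        rcases cy with ⟨hy1, hy2, hyS⟩ | ⟨hy1, hy2, hy3⟩
        · rcases cz with ⟨hz1, hz2, hzS⟩ | ⟨hz1, hz2, hz3⟩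
          · exact absurd ((vertEq y hy1 hy2).trans (vertEq z hz1 hz2).symm) hyz
          · exact ⟨hyS, z.1, hz2, hz3, horMem z hz1 hzs⟩
        · rcases cz with ⟨hz1, hz2, hzS⟩ | ⟨hz1, hz2, hz3⟩
          · exact ⟨hzS, y.1, hy2, hy3, horMem y hy1 hys⟩
          · exact absurd (horUnique y z hy1 hz1 hy3 hz3) hyz
      obtain ⟨h1, v, hA, hM, hvs⟩ := key a c.start_mem_support
      obtain ⟨h2, -⟩ := key (v, a.2) hvs
      rcases hcover hA with h | h
      · exact h1 h
      · exact h2 h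
  · rintro ⟨S, hcard, hsub, hacyc⟩
    refine ⟨S.image (fun e => (Quot.out e).1.1), le_trans Finset.card_image_le hcard, ?_⟩
    intro a b hab
    have hmemU : s(a, b) ∈ ⋃ i, M i := by rw [hpart]; exact H.mem_edgeSet.mpr hab
    obtain ⟨Mi, ⟨i, rfl⟩, hi⟩ := hmemU
    by_contra hcon
    push_neg at hcon
    obtain ⟨ha, hb⟩ := hcon
    have key : ∀ p q : V × Bool, p.1 = a ∨ p.1 = b → q.1 = a ∨ q.1 = b →
        s(p, q) ∉ (S : Set (Sym2 (V × Bool))) := by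
      intro p q hp hq hS
      have hm : (s(p, q)).out.1 ∈ s(p, q) := Sym2.out_fst_mem _
      rw [Sym2.mem_iff] at hm
      have hor : (s(p, q)).out.1.1 = a ∨ (s(p, q)).out.1.1 = b := by
        rcases hm with h | h <;> rw [h] <;> [exact hp; exact hq]
      rcases hor with h | h
      · exact ha (Finset.mem_image.mpr ⟨_, hS, h⟩)
      · exact hb (Finset.mem_image.mpr ⟨_, hS, h⟩)
    have hne : a ≠ b := hab.ne
    set K := (assocColorGraph H (M i)).deleteEdges (S : Set (Sym2 (V × Bool))) with hK
    have h1 : K.Adj (a, false) (b, false) := by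
      rw [hK, SimpleGraph.deleteEdges_adj]
      constructor
      · rw [assocColorGraph, SimpleGraph.fromRel_adj]
        exact ⟨by simp [hne], Or.inl (Or.inr ⟨rfl, hab, hi⟩)⟩
      · exact key _ _ (Or.inl rfl) (Or.inr rfl)
    have h2 : K.Adj (b, false) (b, true) := by
      rw [hK, SimpleGraph.deleteEdges_adj]
      constructor
      · rw [assocColorGraph, SimpleGraph.fromRel_adj]
        exact ⟨by simp, Or.inl (Or.inl ⟨rfl, by simp⟩)⟩
      · exact key _ _ (Or.inr rfl) (Or.inr rfl)
    have h3 : K.Adj (b, true) (a, true) := by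
      rw [hK, SimpleGraph.deleteEdges_adj]
      constructor
      · rw [assocColorGraph, SimpleGraph.fromRel_adj]
        exact ⟨by simp [Ne.symm hne], Or.inl (Or.inr ⟨rfl, hab.symm, Sym2.eq_swap ▸ hi⟩)⟩
      · exact key _ _ (Or.inr rfl) (Or.inl rfl)
    have h4 : K.Adj (a, true) (a, false) := by
      rw [hK, SimpleGraph.deleteEdges_adj]
      constructor
      · rw [assocColorGraph, SimpleGraph.fromRel_adj]
        exact ⟨by simp, Or.inl (Or.inl ⟨rfl, by simp⟩)⟩
      · exact key _ _ (Or.inl rfl) (Or.inl rfl)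
    have hc : (Walk.cons h1 (Walk.cons h2 (Walk.cons h3 (Walk.cons h4 Walk.nil)))).IsCycle := by
      rw [SimpleGraph.Walk.isCycle_def]
      refine ⟨⟨?_⟩, by simp, ?_⟩
      · simp only [Walk.edges_cons, Walk.edges_nil, List.nodup_cons, List.mem_cons,
          List.not_mem_nil, or_false, List.nodup_nil, and_true, Sym2.eq_iff, Prod.mk.injEq]
        simp [hne, Ne.symm hne]
      · simp only [Walk.support_cons, Walk.support_nil, List.tail_cons, List.nodup_cons,
          List.mem_cons, List.not_mem_nil, or_false, List.nodup_nil, and_true, Prod.mk.injEq]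
        simp [hne, Ne.symm hne]
    exact hacyc i _ hc
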